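/- If a proper metric measure space (X,d,μ) with μ positive and finite on nonempty bounded open sets satisfies, for all compactly supported Lipschitz u and some constants C>0, 1<p<n, p<q≤p(n-1)/(n-p), r=p(q-1)/(p-1), θ=(q-p)n/((q-1)(np-(n-p)q)), the Gagliardo-Nirenberg inequality (∫|u|^r dμ)^{1/r} ≤ C(∫|Du|^p dμ)^{θ/p}(∫|u|^q dμ)^{(1-θ)/q}, where |Du|(x) is the local Lipschitz constant, then (X,d) is unbounded. -/

import Mathlib

open MeasureTheory Metric Filter

/-- The local Lipschitz constant `|Du|(x) = limsup_{y→x} |u(y)-u(x)| / d(x,y)`. -/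
noncomputable def localLipConst {X : Type*} [MetricSpace X] (u : X → ℝ) (x : X) : ℝ :=
  Filter.limsup (fun y => |u y - u x| / dist x y) (nhdsWithin x {x}ᶜ)

lemma localLipConst_const {X : Type*} [MetricSpace X] (c : ℝ) (x : X) :
    localLipConst (fun _ => c) x = 0 := by
  unfold localLipConst
  have he : (fun y => |c - c| / dist x y) = fun _ : X => (0:ℝ) := by
    funext y; simp
  rw [he]
  rcases (nhdsWithin x {x}ᶜ).eq_or_neBot with h | h
  · rw [h, Filter.limsup_eq, Real.sInf_of_not_bddBelow (by simpa using not_bddBelow_univ)]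
  · exact limsup_const 0

theorem GN_inequality_implies_unbounded (X : Type*) [MetricSpace X] [ProperSpace X]
    [Nonempty X] [MeasurableSpace X] [BorelSpace X] (μ : Measure X)
    (hμ : ∀ U : Set X, IsOpen U → U.Nonempty → Bornology.IsBounded U → 0 < μ U ∧ μ U < ⊤)
    (n p q r θ C : ℝ) (hn : 2 ≤ n) (hp1 : 1 < p) (hpn : p < n)
    (hpq : p < q) (hqle : q ≤ p * (n - 1) / (n - p))
    (hr : r = p * (q - 1) / (p - 1))
    (hθ : θ = (q - p) * n / ((q - 1) * (n * p - (n - p) * q)))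
    (hC : 0 < C)
    (hGN : ∀ u : X → ℝ, (∃ K : NNReal, LipschitzWith K u) → HasCompactSupport u →
      (∫ x, |u x| ^ r ∂μ) ^ (1 / r) ≤
        C * (∫ x, localLipConst u x ^ p ∂μ) ^ (θ / p) *
          (∫ x, |u x| ^ q ∂μ) ^ ((1 - θ) / q)) :
    ¬ Bornology.IsBounded (Set.univ : Set X) := by
  intro hb
  -- positivity facts
  have hp0 : 0 < p := by linarith
  have hnp : 0 < n - p := by linarith
  have hq1 : 1 < q := by linarith
  have hden : 0 < n * p - (n - p) * q := by
    have h2 : q * (n - p) ≤ p * (n - 1) := (le_div_iff₀ hnp).mp hqle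
    nlinarith
  have hθpos : 0 < θ := by
    rw [hθ]
    apply div_pos (by nlinarith) (by nlinarith)
  have hrpos : 0 < r := by
    rw [hr]; apply div_pos (by nlinarith) (by linarith)
  -- measure of the whole space
  obtain ⟨hμ0, hμfin⟩ := hμ Set.univ isOpen_univ Set.univ_nonempty hb
  have hcompact : IsCompact (Set.univ : Set X) :=
    Metric.isCompact_of_isClosed_isBounded isClosed_univ hb
  -- the constant function 1
  have hGN1 := hGN (fun _ => (1:ℝ)) ⟨0, LipschitzWith.const 1⟩
    (HasCompactSupport.of_support_subset_isCompact hcompact (Set.subset_univ _))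
  have hm : (0:ℝ) < (μ Set.univ).toReal := ENNReal.toReal_pos hμ0.ne' hμfin.ne
  have h1 : (∫ x, |(1:ℝ)| ^ r ∂μ) = (μ Set.univ).toReal := by
    simp [integral_const]
    rfl
  have h2 : (∫ x, localLipConst (fun _ => (1:ℝ)) x ^ p ∂μ) = 0 := by
    have : ∀ x : X, localLipConst (fun _ => (1:ℝ)) x ^ p = 0 := fun x => by
      rw [localLipConst_const, Real.zero_rpow hp0.ne']
    simp [this]
  rw [h1, h2, Real.zero_rpow (by positivity : θ / p ≠ 0)] at hGN1
  simp only [mul_zero, zero_mul] at hGN1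
  have : (0:ℝ) < (μ Set.univ).toReal ^ (1 / r) :=
    Real.rpow_pos_of_pos hm _
  linarith
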